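/- Let A : ℝ² → ℝ² be a nonzero linear map. There exists a positive definite symmetric bilinear form g₀ on ℝ² such that A is g₀-anti-symmetric if and only if tr A = 0 and det A > 0. -/
import Mathlib


set_option maxHeartbeats 1000000 in
/-- Let `A : ℝ² → ℝ²` be a nonzero linear map. There exists a positive definite symmetric
bilinear form `g₀` on `ℝ²` with `A` `g₀`-anti-symmetric if and only if `tr A = 0` and
`det A > 0`. -/
theorem stmt_9 (A : Module.End ℝ (Fin 2 → ℝ)) (hA : A ≠ 0) :
    (∃ g₀ : (Fin 2 → ℝ) →ₗ[ℝ] (Fin 2 → ℝ) →ₗ[ℝ] ℝ,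
      (∀ v : Fin 2 → ℝ, v ≠ 0 → 0 < g₀ v v) ∧
      (∀ v w : Fin 2 → ℝ, g₀ v w = g₀ w v) ∧
      (∀ v w : Fin 2 → ℝ, g₀ (A v) w + g₀ v (A w) = 0)) ↔
    (LinearMap.trace ℝ (Fin 2 → ℝ) A = 0 ∧ 0 < LinearMap.det A) := by
  set e0 : Fin 2 → ℝ := Pi.single 0 1 with he0
  set e1 : Fin 2 → ℝ := Pi.single 1 1 with he1
  set a : ℝ := A e0 0 with ha
  set c : ℝ := A e0 1 with hc
  set b : ℝ := A e1 0 with hb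
  set d : ℝ := A e1 1 with hd
  have hdecomp : ∀ v : Fin 2 → ℝ, v 0 • e0 + v 1 • e1 = v := by
    intro v; funext i; fin_cases i <;> simp [he0, he1, Pi.single_apply]
  have htr : LinearMap.trace ℝ (Fin 2 → ℝ) A = a + d := by
    rw [LinearMap.trace_eq_matrix_trace ℝ (Pi.basisFun ℝ (Fin 2)) A, Matrix.trace]
    simp [LinearMap.toMatrix_apply, Fin.sum_univ_two, Matrix.diag, ha, hd, he0, he1]
  have hdet : LinearMap.det A = a * d - b * c := by
    rw [← LinearMap.det_toMatrix (Pi.basisFun ℝ (Fin 2)) A, Matrix.det_fin_two]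
    simp [LinearMap.toMatrix_apply, ha, hb, hc, hd, he0, he1]
  have hAv : ∀ v : Fin 2 → ℝ, A v = v 0 • A e0 + v 1 • A e1 := by
    intro v
    conv_lhs => rw [← hdecomp v]
    rw [map_add, map_smul, map_smul]
  constructor
  · rintro ⟨g₀, hpos, hsym, hanti⟩
    set p : ℝ := g₀ e0 e0 with hp
    set q : ℝ := g₀ e0 e1 with hq
    set r : ℝ := g₀ e1 e1 with hr
    have hq' : g₀ e1 e0 = q := hsym e1 e0
    -- expansion of g₀
    have hexp : ∀ v w : Fin 2 → ℝ,
        g₀ v w = v 0 * w 0 * p + v 0 * w 1 * q + v 1 * w 0 * q + v 1 * w 1 * r := by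
      intro v w
      conv_lhs => rw [← hdecomp v, ← hdecomp w]
      simp [map_add, map_smul, LinearMap.add_apply, LinearMap.smul_apply, smul_eq_mul, hq']
      try ring
    have he0ne : e0 ≠ 0 := by
      intro h
      have := congrFun h 0
      simp [he0] at this
    have hppos : 0 < p := hpos e0 he0ne
    have he1ne : e1 ≠ 0 := by
      intro h
      have := congrFun h 1
      simp [he1] at this
    have hrpos : 0 < r := hpos e1 he1ne
    -- g₀ (A e0) e0 etc.
    have hge : ∀ v w : Fin 2 → ℝ, g₀ (A v) w =
        (v 0 * a + v 1 * b) * w 0 * p + (v 0 * a + v 1 * b) * w 1 * q +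
        (v 0 * c + v 1 * d) * w 0 * q + (v 0 * c + v 1 * d) * w 1 * r := by
      intro v w
      rw [hexp (A v) w, hAv v]
      simp [ha, hb, hc, hd]
      try ring
    have hE1 : a * p + c * q = 0 := by
      have h := hanti e0 e0
      rw [hsym e0 (A e0)] at h
      rw [hge e0 e0] at h
      simp [he0, he1, Pi.single_apply] at h
      linarith [h]
    have hE2 : b * q + d * r = 0 := by
      have h := hanti e1 e1
      rw [hsym e1 (A e1)] at h
      rw [hge e1 e1] at h
      simp [he0, he1, Pi.single_apply] at h
      linarith [h]
    have hE3 : b * p + (a + d) * q + c * r = 0 := by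
      have h := hanti e0 e1
      rw [hsym e0 (A e1), hge e0 e1, hge e1 e0] at h
      simp [he0, he1, Pi.single_apply] at h
      linarith [h]
    -- pr - q² > 0
    have hvne : (fun i : Fin 2 => if i = 0 then r else -q) ≠ 0 := by
      intro h
      have := congrFun h 0
      simp at this
      exact absurd this (ne_of_gt hrpos)
    have hprq : 0 < p * r - q ^ 2 := by
      have h := hpos _ hvne
      rw [hexp] at h
      simp at h
      nlinarith [h, hrpos]
    have ht : a + d = 0 := by
      have key : (a + d) * (p * r - q ^ 2) = 0 := by
        linear_combination r * hE1 + p * hE2 - q * hE3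
      rcases mul_eq_zero.mp key with h | h
      · exact h
      · exact absurd h (ne_of_gt hprq)
    refine ⟨by rw [htr]; exact ht, ?_⟩
    rw [hdet]
    -- need a*d - b*c > 0, i.e. a² + bc < 0 using d = -a
    have hbp : b * p + c * r = 0 := by linear_combination hE3 - q * ht
    by_cases hc0 : c = 0
    · -- then b = 0, a = 0, d = 0, A = 0, contradiction
      exfalso
      have hb0 : b = 0 := by
        have hbp0 : b * p = 0 := by rw [hc0] at hbp; linarith
        rcases mul_eq_zero.mp hbp0 with h | h
        · exact h
        · exact absurd h (ne_of_gt hppos)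
      have ha0 : a = 0 := by
        have hap0 : a * p = 0 := by rw [hc0] at hE1; linarith
        rcases mul_eq_zero.mp hap0 with h | h
        · exact h
        · exact absurd h (ne_of_gt hppos)
      have hAe0 : A e0 = 0 := by
        rw [← hdecomp (A e0), ← ha, ← hc, ha0, hc0]
        simp
      have hAe1 : A e1 = 0 := by
        have hd0 : d = 0 := by linarith
        rw [← hdecomp (A e1), ← hb, ← hd, hb0, hd0]
        simp
      apply hA
      apply LinearMap.ext
      intro v
      rw [hAv v, hAe0, hAe1]
      simp
    · have hc2 : 0 < c ^ 2 := by positivity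
      have hbc : b * c < 0 := by
        have h : b * c * p = -(c ^ 2 * r) := by linear_combination c * hbp - r * sq_abs c + r * sq_abs c
        nlinarith [mul_pos hc2 hrpos, hppos]
      have key : (a ^ 2 + b * c) * (p * r) = b * c * (p * r - q ^ 2) := by
        linear_combination (-(d * r)) * hE1 + (c * q) * hE2 + (a * p * r) * ht
      have hda : d = -a := by linarith
      rw [hda]
      nlinarith [mul_pos hppos hrpos, mul_neg_of_neg_of_pos hbc hprq, key]
  · rintro ⟨htr0, hdet0⟩
    rw [htr] at htr0
    rw [hdet] at hdet0
    -- d = -a, -a² - bc > 0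
    have hd' : d = -a := by linarith
    have hdpos : 0 < -a ^ 2 - b * c := by rw [hd'] at hdet0; nlinarith [hdet0]
    have hbc : b * c < 0 := by nlinarith [sq_nonneg a]
    have hcne : c ≠ 0 := by
      intro h
      rw [h] at hbc
      simp at hbc
    set s : ℝ := if c < 0 then 1 else -1 with hs
    have hsc : s * c < 0 := by
      by_cases h : c < 0
      · simp only [hs, if_pos h]; linarith
      · simp only [hs, if_neg h]
        push_neg at h
        rcases lt_or_eq_of_le h with h' | h'
        · linarith
        · exact absurd h'.symm hcne
    have hs2 : s ^ 2 = 1 := by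
      by_cases h : c < 0 <;> simp [hs, h] <;> norm_num
    set g11 : ℝ := -(s * c) with hg11
    set g12 : ℝ := s * a with hg12
    set g22 : ℝ := s * b with hg22
    have hg11pos : 0 < g11 := by rw [hg11]; linarith
    have hdetG : 0 < g11 * g22 - g12 ^ 2 := by
      rw [hg11, hg22, hg12]
      nlinarith [hs2, hdpos]
    refine ⟨LinearMap.mk₂ ℝ
      (fun v w => g11 * v 0 * w 0 + g12 * v 0 * w 1 + g12 * v 1 * w 0 + g22 * v 1 * w 1)
      (fun m n w => by simp [Pi.add_apply]; ring)
      (fun t m w => by simp [Pi.smul_apply, smul_eq_mul]; ring)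
      (fun m n w => by simp [Pi.add_apply]; ring)
      (fun t m w => by simp [Pi.smul_apply, smul_eq_mul]; ring), ?_, ?_, ?_⟩
    · intro v hv
      simp [LinearMap.mk₂_apply]
      have hv01 : v 0 ≠ 0 ∨ v 1 ≠ 0 := by
        by_contra h
        push_neg at h
        apply hv
        funext i
        fin_cases i
        · exact h.1
        · exact h.2
      rcases hv01 with h | h
      · rcases eq_or_ne (v 1) 0 with h1 | h1
        · rw [h1]
          have : 0 < v 0 ^ 2 := by positivity
          nlinarith [this, hg11pos]
        · nlinarith [sq_nonneg (g11 * v 0 + g12 * v 1), mul_pos hdetG (by positivity : (0:ℝ) < v 1 ^ 2), hg11pos]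
      · nlinarith [sq_nonneg (g11 * v 0 + g12 * v 1), mul_pos hdetG (by positivity : (0:ℝ) < v 1 ^ 2), hg11pos]
    · intro v w
      simp [LinearMap.mk₂_apply]
      ring
    · intro v w
      simp only [LinearMap.mk₂_apply]
      have h1 : ∀ u : Fin 2 → ℝ, (A u) 0 = u 0 * a + u 1 * b ∧ (A u) 1 = u 0 * c + u 1 * d := by
        intro u
        rw [hAv u]
        constructor <;> simp [ha, hb, hc, hd] <;> ring
      rw [(h1 v).1, (h1 v).2, (h1 w).1, (h1 w).2, hd', hg11, hg12, hg22]
      ring
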